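/- Let G be a gem-free split graph with split partition (C,S). Then any two vertices of S having a common neighbour in C are comparable under domination (one's closed neighbourhood contains the other's neighbourhood). -/

import Mathlib

/-- A grid edge: `(true, x, y)` is the vertical edge from `(x,y)` to `(x,y+1)`;
`(false, x, y)` is the horizontal edge from `(x,y)` to `(x+1,y)`. -/
abbrev GridEdge := Bool × ℤ × ℤ

/-- A single-bend (B1) path on the grid: bend-point `(x,y)`, a vertical arm of
length `h` (upwards if `vUp`, else downwards) and a horizontal arm of length `w`
(rightwards if `hRight`, else leftwards). -/
structure BendPath where
  x : ℤ
  y : ℤ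
  h : ℕ
  w : ℕ
  vUp : Bool
  hRight : Bool
  nontriv : 0 < h + w

namespace BendPath

def vertEdges (p : BendPath) : Set GridEdge :=
  {e | ∃ i : ℕ, i < p.h ∧ e = (true, p.x, if p.vUp then p.y + i else p.y - 1 - i)}

def horizEdges (p : BendPath) : Set GridEdge :=
  {e | ∃ i : ℕ, i < p.w ∧ e = (false, (if p.hRight then p.x + i else p.x - 1 - i), p.y)}

def edges (p : BendPath) : Set GridEdge := p.vertEdges ∪ p.horizEdges

/-- shape ⌞ : vertical up, horizontal right -/
def isL (p : BendPath) : Prop := p.vUp = true ∧ p.hRight = true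
/-- shape ⌟ : vertical up, horizontal left -/
def isJ (p : BendPath) : Prop := p.vUp = true ∧ p.hRight = false
/-- shape ⌝ : vertical down, horizontal left -/
def isN (p : BendPath) : Prop := p.vUp = false ∧ p.hRight = false
/-- shape ⌜ : vertical down, horizontal right -/
def isGamma (p : BendPath) : Prop := p.vUp = false ∧ p.hRight = true

end BendPath

def edgeEndpoints (e : GridEdge) : Set (ℤ × ℤ) :=
  if e.1 then {(e.2.1, e.2.2), (e.2.1, e.2.2 + 1)} else {(e.2.1, e.2.2), (e.2.1 + 1, e.2.2)}

def BendPath.points (p : BendPath) : Set (ℤ × ℤ) := ⋃ e ∈ p.edges, edgeEndpoints e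

def SharesEdge (p q : BendPath) : Prop := ∃ e, e ∈ p.edges ∧ e ∈ q.edges

/-- `P` is an EPG representation of `G` : distinct vertices are adjacent iff
their paths share a grid edge. -/
def IsEPGRep {V : Type*} (G : SimpleGraph V) (P : V → BendPath) : Prop :=
  ∀ u v : V, u ≠ v → (G.Adj u v ↔ SharesEdge (P u) (P v))

def SplitPartition {V : Type*} (G : SimpleGraph V) (C S : Set V) : Prop :=
  (∀ v, v ∈ C ∨ v ∈ S) ∧ Disjoint C S ∧ G.IsClique C ∧
    S.Pairwise (fun a b => ¬ G.Adj a b)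

/-- The gem: path a=0, b=1, c=2, d=3 plus e=4 adjacent to all of a,b,c,d. -/
def Gem : SimpleGraph (Fin 5) := SimpleGraph.fromRel (fun i j =>
  (i, j) ∈ ({(0,1),(1,2),(2,3),(4,0),(4,1),(4,2),(4,3)} : Set (Fin 5 × Fin 5)))

/-- `G` contains an induced copy of `H`. -/
def ContainsInduced {α V : Type*} (H : SimpleGraph α) (G : SimpleGraph V) : Prop :=
  ∃ f : α → V, Function.Injective f ∧ ∀ i j, H.Adj i j ↔ G.Adj (f i) (f j)

/-- `x` dominates `y`. -/
def Dominates {V : Type*} (G : SimpleGraph V) (x y : V) : Prop :=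
  G.neighborSet y ⊆ insert x (G.neighborSet x)

/-- In a gem-free split graph, two S-vertices with a common neighbour in C are
comparable. -/
theorem gemfree_comparable {V : Type*} (G : SimpleGraph V) (C S : Set V)
    (hsplit : SplitPartition G C S) (hgemfree : ¬ ContainsInduced Gem G)
    (s1 s2 : V) (hs1 : s1 ∈ S) (hs2 : s2 ∈ S)
    (hcommon : ∃ c ∈ C, G.Adj s1 c ∧ G.Adj s2 c) :
    Dominates G s1 s2 ∨ Dominates G s2 s1 := by
  obtain ⟨hall, hdisj, hclique, hstable⟩ := hsplit
  obtain ⟨c0, hc0C, hc0a1, hc0a2⟩ := hcommon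
  by_cases hEq : s1 = s2
  · left; subst hEq; intro x hx; exact Set.mem_insert_of_mem _ hx
  by_contra hcon
  push_neg at hcon
  obtain ⟨hnd1, hnd2⟩ := hcon
  -- extract c1 : neighbor of s2 not dominated
  rw [Dominates, Set.not_subset] at hnd1 hnd2
  obtain ⟨c1, hc1n, hc1not⟩ := hnd1
  obtain ⟨c2, hc2n, hc2not⟩ := hnd2
  simp only [Set.mem_insert_iff, SimpleGraph.mem_neighborSet] at hc1n hc1not hc2n hc2not
  push_neg at hc1not hc2not
  obtain ⟨hc1ne, hc1na⟩ := hc1not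
  obtain ⟨hc2ne, hc2na⟩ := hc2not
  -- s1 s2 not adjacent
  have hs12 : ¬ G.Adj s1 s2 := hstable hs1 hs2 hEq
  -- membership in C
  have s1nC : s1 ∉ C := fun h => hdisj.ne_of_mem h hs1 rfl
  have s2nC : s2 ∉ C := fun h => hdisj.ne_of_mem h hs2 rfl
  have hc1C : c1 ∈ C := by
    rcases hall c1 with h | h
    · exact h
    · exact absurd hc1n (hstable hs2 h (G.ne_of_adj hc1n))
  have hc2C : c2 ∈ C := by
    rcases hall c2 with h | h
    · exact h
    · exact absurd hc2n (hstable hs1 h (G.ne_of_adj hc2n))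
  -- distinctness among c's
  have hc12 : c1 ≠ c2 := fun h => hc1na (h ▸ hc2n)
  have hc01 : c0 ≠ c1 := fun h => hc1na (h ▸ hc0a1)
  have hc02 : c0 ≠ c2 := by
    intro h; exact hc2na (h ▸ hc0a2)
  have hac12 : G.Adj c1 c2 := hclique hc1C hc2C hc12
  have hac01 : G.Adj c0 c1 := hclique hc0C hc1C hc01
  have hac02 : G.Adj c0 c2 := hclique hc0C hc2C hc02
  -- S vertices differ from C vertices
  have hs1c1 : s1 ≠ c1 := hc1ne.symm
  have hs1c2 : s1 ≠ c2 := fun h => s1nC (h ▸ hc2C)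
  have hs1c0 : s1 ≠ c0 := fun h => s1nC (h ▸ hc0C)
  have hs2c1 : s2 ≠ c1 := fun h => s2nC (h ▸ hc1C)
  have hs2c2 : s2 ≠ c2 := fun h => s2nC (h ▸ hc2C)
  have hs2c0 : s2 ≠ c0 := fun h => s2nC (h ▸ hc0C)
  have hc2na' : ¬ G.Adj s2 c2 := hc2na
  have hc1na' : ¬ G.Adj s1 c1 := hc1na
  -- build the gem: path s1 - c2 - c1 - s2 with apex c0
  apply hgemfree
  refine ⟨![s1, c2, c1, s2, c0], ?_, ?_⟩
  · intro i j hij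
    fin_cases i <;> fin_cases j <;>
      simp_all [Matrix.cons_val_zero, Matrix.cons_val_one] <;>
      first
        | rfl
        | (exact absurd hij.symm (by assumption))
        | (exact absurd hij (by assumption))
  · have key1 : G.Adj s1 c2 := hc2n
    have key2 : G.Adj c2 c1 := hac12.symm
    have key3 : G.Adj c1 s2 := hc1n.symm
    have key4 : G.Adj c0 s1 := hc0a1.symm
    have key5 : G.Adj c0 c2 := hac02
    have key6 : G.Adj c0 c1 := hac01
    have key7 : G.Adj c0 s2 := hc0a2.symm
    have n1 : ¬ G.Adj s1 c1 := hc1na'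
    have n2 : ¬ G.Adj s1 s2 := hs12
    have n3 : ¬ G.Adj c2 s2 := fun h => hc2na' h.symm
    intro i j
    fin_cases i <;> fin_cases j <;>
      simp only [Gem, SimpleGraph.fromRel_adj, Set.mem_insert_iff,
        Set.mem_singleton_iff, Prod.mk.injEq, Matrix.cons_val_zero,
        Matrix.cons_val_one, Matrix.head_cons, Matrix.cons_val_two,
        Matrix.tail_cons, Matrix.cons_val_three, Matrix.cons_val_four] <;>
      first
        | (constructor
           · intro _
             first
               | exact key1 | exact key2 | exact key3 | exact key4
               | exact key5 | exact key6 | exact key7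
               | exact key1.symm | exact key2.symm | exact key3.symm
               | exact key4.symm | exact key5.symm | exact key6.symm
               | exact key7.symm
           · intro h
             refine ⟨by decide, by decide⟩)
        | (constructor
           · intro h
             exact absurd h (by decide)
           · intro h
             exfalso
             first
               | exact n1 h | exact n2 h | exact n3 h
               | exact n1 h.symm | exact n2 h.symm | exact n3 h.symm
               | exact G.irrefl h)
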